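/- For every λ ∈ [0, (n-1)/2] and every r > 1, ω_{iλ}^{(n)}(a_r) ≥ C sinh(λ r)/(λ sinh(r)^{(n-1)/2}), where C = a_n e^{-(n-1)/2} (1 - 2e^{-1})^{(n-3)/2} and a_n = 2^{(n-1)/2}/B((n-1)/2, 1/2). (For λ = 0 the ratio sinh(λr)/λ is interpreted as r.) -/

import Mathlib

open intervalIntegral Real

/-- The real Beta function `B(x,y) = Γ(x)Γ(y)/Γ(x+y)`. -/
noncomputable def realBeta (x y : ℝ) : ℝ :=
  Real.Gamma x * Real.Gamma y / Real.Gamma (x + y)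

/-- The normalizing constant `a_n = 2^{(n-1)/2}/B((n-1)/2, 1/2)`. -/
noncomputable def aconst (n : ℕ) : ℝ :=
  (2:ℝ) ^ (((n:ℝ) - 1) / 2) / realBeta (((n:ℝ) - 1) / 2) (1/2)

/-- The spherical function `ω_{iλ}^{(n)}(a_r)` of imaginary parameter on
`n`-dimensional real hyperbolic space. -/
noncomputable def sphFnI (n : ℕ) (lam r : ℝ) : ℝ :=
  aconst n * Real.sinh r ^ ((2:ℝ) - n) *
    ∫ s in (0:ℝ)..r, (Real.cosh r - Real.cosh s) ^ (((n:ℝ) - 3) / 2) * Real.cosh (lam * s)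

/-- Region 1 estimate: `cosh r - cosh (r-1) ≥ sinh r · (1 - 2e⁻¹)` for `r ≥ 1`. -/
lemma sph_aux_region1 {r : ℝ} (hr : 1 ≤ r) :
    Real.sinh r * (1 - 2 * Real.exp (-1)) ≤ Real.cosh r - Real.cosh (r - 1) := by
  rw [Real.cosh_eq, Real.cosh_eq, Real.sinh_eq,
    show r - 1 = r + (-1) by ring, show -(r + (-1)) = -r + 1 by ring,
    Real.exp_add, Real.exp_add]
  have h1 : Real.exp (-r) * Real.exp 1 ≤ Real.exp r * Real.exp (-1) := by
    rw [← Real.exp_add, ← Real.exp_add]; exact Real.exp_le_exp.2 (by linarith)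
  have h2 : Real.exp (-1) ≤ 1 := by
    rw [show (1:ℝ) = Real.exp 0 from Real.exp_zero.symm]; exact Real.exp_le_exp.2 (by norm_num)
  have h3 : Real.exp (-r) * Real.exp (-1) ≤ Real.exp (-r) :=
    mul_le_of_le_one_right (Real.exp_pos (-r)).le h2
  nlinarith [Real.exp_pos (-r), Real.exp_pos r]

/-- Region 2 estimate: `cosh r - cosh s ≥ sinh r · (1-e⁻¹)² (r-s)` for `r-1 ≤ s ≤ r`, `1 ≤ r`. -/
lemma sph_aux_region2 {r s : ℝ} (hr : 1 ≤ r) (hs1 : r - 1 ≤ s) (hs2 : s ≤ r) :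
    Real.sinh r * ((1 - Real.exp (-1)) * (1 - Real.exp (-1))) * (r - s)
      ≤ Real.cosh r - Real.cosh s := by
  have iden : Real.cosh r - Real.cosh s
      = (Real.exp r - Real.exp s) * (1 - Real.exp (-(r+s))) / 2 := by
    have e1 : Real.exp (-(r+s)) * Real.exp r = Real.exp (-s) := by rw [← Real.exp_add]; ring_nf
    have e2 : Real.exp (-(r+s)) * Real.exp s = Real.exp (-r) := by rw [← Real.exp_add]; ring_nf
    rw [Real.cosh_eq, Real.cosh_eq]; nlinarith [e1, e2]
  have chord : Real.exp (-(r - s)) ≤ 1 - (1 - Real.exp (-1)) * (r - s) := by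
    have h := convexOn_exp.2 (Set.mem_univ (0:ℝ)) (Set.mem_univ (-1:ℝ))
        (show (0:ℝ) ≤ 1 - (r - s) by linarith) (show (0:ℝ) ≤ r - s by linarith)
        (show (1 - (r-s)) + (r-s) = 1 by ring)
    simp only [smul_eq_mul, mul_zero, mul_neg_one, zero_add, Real.exp_zero] at h
    nlinarith [h]
  have hc1 : (0:ℝ) < 1 - Real.exp (-1) := by
    have : Real.exp (-1) < Real.exp 0 := Real.exp_lt_exp.2 (by norm_num)
    rw [Real.exp_zero] at this; linarith
  have h1 : Real.exp r * ((1 - Real.exp (-1)) * (r - s)) ≤ Real.exp r - Real.exp s := by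
    have hs : Real.exp s = Real.exp r * Real.exp (-(r - s)) := by rw [← Real.exp_add]; ring_nf
    rw [hs]; nlinarith [Real.exp_pos r, chord]
  have h1' : (0:ℝ) ≤ Real.exp r - Real.exp s := by
    have : Real.exp s ≤ Real.exp r := Real.exp_le_exp.2 hs2
    linarith
  have h2 : 1 - Real.exp (-1) ≤ 1 - Real.exp (-(r+s)) := by
    have : Real.exp (-(r+s)) ≤ Real.exp (-1) := Real.exp_le_exp.2 (by linarith)
    linarith
  have hK : Real.sinh r ≤ Real.exp r / 2 := by
    rw [Real.sinh_eq]; nlinarith [Real.exp_pos (-r)]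
  have hKpos : (0:ℝ) ≤ Real.sinh r := Real.sinh_nonneg_iff.2 (by linarith)
  have hrs : (0:ℝ) ≤ r - s := by linarith
  calc Real.sinh r * ((1 - Real.exp (-1)) * (1 - Real.exp (-1))) * (r - s)
      ≤ Real.exp r / 2 * ((1 - Real.exp (-1)) * (1 - Real.exp (-1))) * (r - s) := by
        apply mul_le_mul_of_nonneg_right (mul_le_mul_of_nonneg_right hK (by positivity)) hrs
    _ = (Real.exp r * ((1 - Real.exp (-1)) * (r - s))) * (1 - Real.exp (-1)) / 2 := by ring
    _ ≤ (Real.exp r - Real.exp s) * (1 - Real.exp (-1)) / 2 := by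
        have := mul_le_mul_of_nonneg_right h1 hc1.le
        linarith
    _ ≤ (Real.exp r - Real.exp s) * (1 - Real.exp (-(r+s))) / 2 := by
        have := mul_le_mul_of_nonneg_left h2 h1'
        linarith
    _ = Real.cosh r - Real.cosh s := iden.symm

/-- Key estimate: `(p+1) sinh λ ≤ λ e^{p+1}` for `0 < λ ≤ p+1`. -/
lemma sph_aux_sinh_le {p lam : ℝ} (hp : 0 ≤ p) (h0 : 0 < lam) (h1 : lam ≤ p + 1) :
    (p + 1) * Real.sinh lam ≤ lam * Real.exp (p + 1) := by
  rcases le_total lam 1 with hl | hl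
  · have hs : Real.sinh lam ≤ lam * Real.exp lam := by
      have e1 : Real.exp (-lam) = Real.exp lam * Real.exp (-2*lam) := by
        rw [← Real.exp_add]; ring_nf
      have e2 := Real.add_one_le_exp (-2*lam)
      rw [Real.sinh_eq, e1]
      nlinarith [Real.exp_pos lam]
    have h3 : Real.exp lam ≤ Real.exp 1 := Real.exp_le_exp.2 hl
    have h4 : (p+1) * Real.exp 1 ≤ Real.exp (p+1) := by
      rw [Real.exp_add]
      have := Real.add_one_le_exp p
      nlinarith [Real.exp_pos 1]
    calc (p+1) * Real.sinh lam ≤ (p+1) * (lam * Real.exp lam) :=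
          mul_le_mul_of_nonneg_left hs (by linarith)
      _ ≤ (p+1) * (lam * Real.exp 1) := by
          apply mul_le_mul_of_nonneg_left (mul_le_mul_of_nonneg_left h3 h0.le) (by linarith)
      _ = lam * ((p+1) * Real.exp 1) := by ring
      _ ≤ lam * Real.exp (p+1) := mul_le_mul_of_nonneg_left h4 h0.le
  · have hs : Real.sinh lam ≤ Real.exp lam / 2 := by
      rw [Real.sinh_eq]; nlinarith [Real.exp_pos (-lam)]
    have hsplit : Real.exp (p+1) = Real.exp lam * Real.exp (p+1-lam) := by
      rw [← Real.exp_add]; ring_nf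
    have hb := Real.add_one_le_exp (p+1-lam)
    have hq : (p+1)/2 ≤ lam * (p+1-lam+1) := by
      nlinarith [mul_nonneg (sub_nonneg.2 hl) (sub_nonneg.2 h1)]
    rw [hsplit]
    calc (p+1) * Real.sinh lam ≤ (p+1) * (Real.exp lam/2) :=
          mul_le_mul_of_nonneg_left hs (by linarith)
      _ = (p+1)/2 * Real.exp lam := by ring
      _ ≤ (lam * (p+1-lam+1)) * Real.exp lam := mul_le_mul_of_nonneg_right hq (Real.exp_pos lam).le
      _ ≤ (lam * Real.exp (p+1-lam)) * Real.exp lam :=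
          mul_le_mul_of_nonneg_right (mul_le_mul_of_nonneg_left hb h0.le) (Real.exp_pos lam).le
      _ = lam * (Real.exp lam * Real.exp (p+1-lam)) := by ring

/-- Integral of `cosh (λ s)`. -/
lemma sph_aux_integral_cosh {lam a : ℝ} (h : lam ≠ 0) :
    ∫ s in (0:ℝ)..a, Real.cosh (lam * s) = Real.sinh (lam * a) / lam := by
  have hderiv : ∀ s ∈ Set.uIcc (0:ℝ) a, HasDerivAt (fun t => Real.sinh (lam * t) / lam)
      (Real.cosh (lam * s)) s := by
    intro s _
    have h1 : HasDerivAt (fun t : ℝ => lam * t) lam s := by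
      simpa using (hasDerivAt_id s).const_mul lam
    have h2 := (Real.hasDerivAt_sinh (lam * s)).comp s h1
    have h3 := h2.div_const lam
    rw [mul_div_cancel_right₀ _ h] at h3
    exact h3
  rw [intervalIntegral.integral_eq_sub_of_hasDerivAt hderiv
    ((Real.continuous_cosh.comp (continuous_const.mul continuous_id)).intervalIntegrable 0 a)]
  simp

set_option maxHeartbeats 1600000 in
theorem sphFnI_lower_bound (n : ℕ) (hn : 3 ≤ n) (lam r : ℝ)
    (hlam0 : 0 ≤ lam) (hlam : lam ≤ ((n:ℝ) - 1) / 2) (hr : 1 < r) :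
    aconst n * Real.exp (-((n:ℝ) - 1) / 2) * (1 - 2 * Real.exp (-1)) ^ (((n:ℝ) - 3) / 2) *
        ((if lam = 0 then r else Real.sinh (lam * r) / lam) / Real.sinh r ^ (((n:ℝ) - 1) / 2))
      ≤ sphFnI n lam r := by
  have hn3 : (3:ℝ) ≤ (n:ℝ) := by exact_mod_cast hn
  set S : ℝ := if lam = 0 then r else Real.sinh (lam * r) / lam with hS_def
  set p : ℝ := ((n:ℝ) - 3) / 2 with hp_def
  have hp0 : (0:ℝ) ≤ p := by rw [hp_def]; linarith
  have hlam' : lam ≤ p + 1 := by rw [hp_def]; linarith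
  set c1 : ℝ := 1 - Real.exp (-1) with hc1_def
  set c2 : ℝ := 1 - 2 * Real.exp (-1) with hc2_def
  have he1 : Real.exp (-1) < 1 := by
    have : Real.exp (-1) < Real.exp 0 := Real.exp_lt_exp.2 (by norm_num)
    rwa [Real.exp_zero] at this
  have he2 : Real.exp (-1) ≤ 1/2 := by
    have hme : Real.exp (-1) * Real.exp 1 = 1 := by rw [← Real.exp_add]; norm_num
    nlinarith [Real.exp_one_gt_d9, Real.exp_pos (-1)]
  have hc1pos : (0:ℝ) < c1 := by rw [hc1_def]; linarith
  have hc2nn : (0:ℝ) ≤ c2 := by rw [hc2_def]; linarith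
  have hc2c1 : c2 ≤ c1 * c1 := by
    rw [hc1_def, hc2_def]; nlinarith [sq_nonneg (Real.exp (-1))]
  set K : ℝ := Real.sinh r with hK_def
  have hKpos : (0:ℝ) < K := by rw [hK_def]; exact Real.sinh_pos_iff.2 (by linarith)
  set Bc : ℝ := Real.cosh (lam * (r-1)) with hBc_def
  have hBcpos : (0:ℝ) < Bc := by rw [hBc_def]; exact Real.cosh_pos _
  set g : ℝ → ℝ := fun s => (Real.cosh r - Real.cosh s) ^ p * Real.cosh (lam * s) with hg_def
  have hrpow_cont : Continuous (fun x : ℝ => x ^ p) :=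
    continuous_iff_continuousAt.2 fun x => Real.continuousAt_rpow_const x p (Or.inr hp0)
  have hgc : Continuous g := by
    apply Continuous.mul
    · exact hrpow_cont.comp (continuous_const.sub Real.continuous_cosh)
    · exact Real.continuous_cosh.comp (continuous_const.mul continuous_id)
  set IA : ℝ := ∫ s in (0:ℝ)..(r-1), Real.cosh (lam * s) with hIA_def
  -- splitting the integral
  have hsplit : (∫ s in (0:ℝ)..(r-1), g s) + (∫ s in (r-1)..r, g s) = ∫ s in (0:ℝ)..r, g s :=
    intervalIntegral.integral_add_adjacent_intervals (hgc.intervalIntegrable 0 (r-1))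
      (hgc.intervalIntegrable (r-1) r)
  -- region 1 integral bound
  have hlow1 : (K * c2) ^ p * IA ≤ ∫ s in (0:ℝ)..(r-1), g s := by
    have hmono : ∫ s in (0:ℝ)..(r-1), (K * c2) ^ p * Real.cosh (lam * s)
        ≤ ∫ s in (0:ℝ)..(r-1), g s := by
      apply intervalIntegral.integral_mono_on (by linarith)
        ((continuous_const.mul (Real.continuous_cosh.comp
          (continuous_const.mul continuous_id))).intervalIntegrable 0 (r-1))
        (hgc.intervalIntegrable 0 (r-1))
      intro s hs
      have hcs : Real.cosh s ≤ Real.cosh (r-1) := by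
        rw [Real.cosh_le_cosh, abs_of_nonneg hs.1, abs_of_nonneg (by linarith : (0:ℝ) ≤ r-1)]
        exact hs.2
      have hbase : K * c2 ≤ Real.cosh r - Real.cosh s := by
        have := sph_aux_region1 (le_of_lt hr)
        rw [← hK_def, ← hc2_def] at this
        linarith
      exact mul_le_mul_of_nonneg_right
        (Real.rpow_le_rpow (mul_nonneg hKpos.le hc2nn) hbase hp0) (Real.cosh_pos _).le
    rwa [intervalIntegral.integral_const_mul, ← hIA_def] at hmono
  -- region 2 integral bound
  have hlow2 : (K * (c1 * c1)) ^ p * (Bc * (1/(p+1))) ≤ ∫ s in (r-1)..r, g s := by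
    have hmono : ∫ s in (r-1)..r, (K * (c1 * c1)) ^ p * ((r - s) ^ p * Bc)
        ≤ ∫ s in (r-1)..r, g s := by
      apply intervalIntegral.integral_mono_on (by linarith)
      · apply Continuous.intervalIntegrable
        apply continuous_const.mul
        exact (hrpow_cont.comp (continuous_const.sub continuous_id)).mul continuous_const
      · exact hgc.intervalIntegrable (r-1) r
      intro s hs
      have hreg2 : K * (c1 * c1) * (r - s) ≤ Real.cosh r - Real.cosh s := by
        have := sph_aux_region2 (le_of_lt hr) hs.1 hs.2
        rw [← hK_def, ← hc1_def] at this
        linarith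
      have hbase_nn : (0:ℝ) ≤ K * (c1 * c1) * (r - s) := by
        have : (0:ℝ) ≤ r - s := by linarith [hs.2]
        positivity
      have hrpow : (K * (c1 * c1)) ^ p * (r - s) ^ p ≤ (Real.cosh r - Real.cosh s) ^ p := by
        rw [← Real.mul_rpow (by positivity) (by linarith [hs.2] : (0:ℝ) ≤ r - s)]
        exact Real.rpow_le_rpow hbase_nn hreg2 hp0
      have hcosh : Bc ≤ Real.cosh (lam * s) := by
        rw [hBc_def, Real.cosh_le_cosh,
          abs_of_nonneg (mul_nonneg hlam0 (by linarith : (0:ℝ) ≤ r-1)),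
          abs_of_nonneg (mul_nonneg hlam0 (by linarith [hs.1] : (0:ℝ) ≤ s))]
        exact mul_le_mul_of_nonneg_left hs.1 hlam0
      calc (K * (c1 * c1)) ^ p * ((r - s) ^ p * Bc)
          = ((K * (c1 * c1)) ^ p * (r - s) ^ p) * Bc := by ring
        _ ≤ (Real.cosh r - Real.cosh s) ^ p * Real.cosh (lam * s) :=
            mul_le_mul hrpow hcosh hBcpos.le
              (Real.rpow_nonneg (by linarith [hreg2, hbase_nn]) p)
    have hval : ∫ s in (r-1)..r, (K * (c1 * c1)) ^ p * ((r - s) ^ p * Bc)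
        = (K * (c1 * c1)) ^ p * (Bc * (1/(p+1))) := by
      rw [intervalIntegral.integral_const_mul, intervalIntegral.integral_mul_const]
      have : ∫ s in (r-1)..r, (r - s) ^ p = 1 / (p + 1) := by
        rw [intervalIntegral.integral_comp_sub_left (fun x => x ^ p) r,
          show r - r = (0:ℝ) by ring, show r - (r-1) = (1:ℝ) by ring,
          integral_rpow (Or.inl (by linarith : (-1:ℝ) < p)),
          Real.one_rpow, Real.zero_rpow (by linarith : p + 1 ≠ 0)]
        ring
      rw [this]; ring
    rwa [hval] at hmono
  -- combined integral bound
  have hI : K ^ p * (c2 ^ p * IA + (c1 * c1) ^ p * (Bc * (1/(p+1)))) ≤ ∫ s in (0:ℝ)..r, g s := by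
    have e1 : (K * c2) ^ p = K ^ p * c2 ^ p := Real.mul_rpow hKpos.le hc2nn
    have e2 : (K * (c1 * c1)) ^ p = K ^ p * (c1 * c1) ^ p :=
      Real.mul_rpow hKpos.le (by positivity)
    calc K ^ p * (c2 ^ p * IA + (c1 * c1) ^ p * (Bc * (1/(p+1))))
        = (K * c2) ^ p * IA + (K * (c1 * c1)) ^ p * (Bc * (1/(p+1))) := by rw [e1, e2]; ring
      _ ≤ (∫ s in (0:ℝ)..(r-1), g s) + (∫ s in (r-1)..r, g s) := add_le_add hlow1 hlow2
      _ = ∫ s in (0:ℝ)..r, g s := hsplit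
  -- exp estimates
  have hexp_inv : Real.exp (-(p+1)) * (p+1) ≤ 1 := by
    have h : p + 1 ≤ Real.exp (p+1) := by linarith [Real.add_one_le_exp (p+1)]
    calc Real.exp (-(p+1)) * (p+1) ≤ Real.exp (-(p+1)) * Real.exp (p+1) :=
          mul_le_mul_of_nonneg_left h (Real.exp_pos _).le
      _ = 1 := by rw [← Real.exp_add, show -(p+1) + (p+1) = 0 by ring, Real.exp_zero]
  have hc2c1p : c2 ^ p ≤ (c1 * c1) ^ p := Real.rpow_le_rpow hc2nn hc2c1 hp0
  have hc2pnn : (0:ℝ) ≤ c2 ^ p := Real.rpow_nonneg hc2nn p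
  have hp1pos : (0:ℝ) < p + 1 := by linarith
  -- the key comparison (star)
  have hstar : Real.exp (-(p+1)) * (c2 ^ p * S)
      ≤ c2 ^ p * IA + (c1 * c1) ^ p * (Bc * (1/(p+1))) := by
    have hBterm : Real.exp (-(p+1)) * c2 ^ p ≤ (c1 * c1) ^ p * (1/(p+1)) := by
      have h1 : Real.exp (-(p+1)) ≤ 1/(p+1) := by
        rw [le_div_iff₀ hp1pos]; exact hexp_inv
      calc Real.exp (-(p+1)) * c2 ^ p ≤ (1/(p+1)) * c2 ^ p :=
            mul_le_mul_of_nonneg_right h1 hc2pnn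
        _ ≤ (1/(p+1)) * (c1 * c1) ^ p := mul_le_mul_of_nonneg_left hc2c1p (by positivity)
        _ = (c1 * c1) ^ p * (1/(p+1)) := by ring
    rcases eq_or_lt_of_le hlam0 with hl0 | hl0
    · -- lam = 0
      have hl0' : lam = 0 := hl0.symm
      have hSval : S = r := by rw [hS_def, if_pos hl0']
      have hIAval : IA = r - 1 := by
        rw [hIA_def, hl0']
        simp
      have hBcval : Bc = 1 := by rw [hBc_def, hl0']; simp
      rw [hSval, hIAval, hBcval]
      have hexple : Real.exp (-(p+1)) ≤ 1 := by
        calc Real.exp (-(p+1)) ≤ Real.exp 0 := Real.exp_le_exp.2 (by linarith)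
          _ = 1 := Real.exp_zero
      have ht1 : Real.exp (-(p+1)) * c2 ^ p * (r - 1) ≤ c2 ^ p * (r - 1) := by
        apply mul_le_mul_of_nonneg_right _ (by linarith : (0:ℝ) ≤ r - 1)
        exact mul_le_of_le_one_left hc2pnn hexple
      have ht2 : Real.exp (-(p+1)) * c2 ^ p ≤ (c1 * c1) ^ p * (1 * (1/(p+1))) := by
        rw [one_mul]; exact hBterm
      nlinarith [ht1, ht2]
    · -- lam > 0
      have hlne : lam ≠ 0 := ne_of_gt hl0
      have hSval : S = Real.sinh (lam * r) / lam := by rw [hS_def, if_neg hlne]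
      have hIAval : IA = Real.sinh (lam * (r-1)) / lam := by
        rw [hIA_def]; exact sph_aux_integral_cosh hlne
      have hsinh_add : Real.sinh (lam * r)
          = Real.sinh (lam * (r-1)) * Real.cosh lam + Real.cosh (lam * (r-1)) * Real.sinh lam := by
        rw [show lam * r = lam * (r-1) + lam by ring, Real.sinh_add]
      have hsA : (0:ℝ) ≤ Real.sinh (lam * (r-1)) :=
        Real.sinh_nonneg_iff.2 (mul_nonneg hlam0 (by linarith))
      have hcoshe : Real.exp (-(p+1)) * Real.cosh lam ≤ 1 := by
        have h1 : Real.cosh lam ≤ Real.exp lam := by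
          rw [Real.cosh_eq]
          have : Real.exp (-lam) ≤ Real.exp lam := Real.exp_le_exp.2 (by linarith)
          linarith
        calc Real.exp (-(p+1)) * Real.cosh lam ≤ Real.exp (-(p+1)) * Real.exp lam :=
              mul_le_mul_of_nonneg_left h1 (Real.exp_pos _).le
          _ = Real.exp (lam - (p+1)) := by rw [← Real.exp_add]; ring_nf
          _ ≤ Real.exp 0 := Real.exp_le_exp.2 (by linarith)
          _ = 1 := Real.exp_zero
      have hsinhlam : Real.exp (-(p+1)) * Real.sinh lam ≤ lam * (1/(p+1)) := by
        have h1 := sph_aux_sinh_le hp0 hl0 hlam'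
        have h2 : Real.exp (-(p+1)) * ((p+1) * Real.sinh lam)
            ≤ Real.exp (-(p+1)) * (lam * Real.exp (p+1)) :=
          mul_le_mul_of_nonneg_left h1 (Real.exp_pos _).le
        have h3 : Real.exp (-(p+1)) * (lam * Real.exp (p+1)) = lam := by
          rw [show Real.exp (-(p+1)) * (lam * Real.exp (p+1))
            = lam * (Real.exp (-(p+1)) * Real.exp (p+1)) by ring, ← Real.exp_add,
            show -(p+1) + (p+1) = 0 by ring, Real.exp_zero, mul_one]
        rw [h3] at h2
        rw [mul_one_div, le_div_iff₀ hp1pos]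
        nlinarith [h2]
      -- main inequality multiplied by lam
      have hmain : Real.exp (-(p+1)) * (c2 ^ p * Real.sinh (lam * r))
          ≤ c2 ^ p * Real.sinh (lam * (r-1)) + (c1 * c1) ^ p * (Bc * (lam * (1/(p+1)))) := by
        rw [hsinh_add]
        have t1 : Real.exp (-(p+1)) * (c2 ^ p * (Real.sinh (lam * (r-1)) * Real.cosh lam))
            ≤ c2 ^ p * Real.sinh (lam * (r-1)) := by
          have : Real.exp (-(p+1)) * (c2 ^ p * (Real.sinh (lam * (r-1)) * Real.cosh lam))
              = (Real.exp (-(p+1)) * Real.cosh lam) * (c2 ^ p * Real.sinh (lam * (r-1))) := by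
            ring
          rw [this]
          exact mul_le_of_le_one_left (mul_nonneg hc2pnn hsA) hcoshe
        have t2 : Real.exp (-(p+1)) * (c2 ^ p * (Real.cosh (lam * (r-1)) * Real.sinh lam))
            ≤ (c1 * c1) ^ p * (Bc * (lam * (1/(p+1)))) := by
          rw [← hBc_def]
          have s1 : Real.exp (-(p+1)) * (c2 ^ p * (Bc * Real.sinh lam))
              = (c2 ^ p * Bc) * (Real.exp (-(p+1)) * Real.sinh lam) := by ring
          rw [s1]
          calc (c2 ^ p * Bc) * (Real.exp (-(p+1)) * Real.sinh lam)
              ≤ (c2 ^ p * Bc) * (lam * (1/(p+1))) :=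
                mul_le_mul_of_nonneg_left hsinhlam (mul_nonneg hc2pnn hBcpos.le)
            _ ≤ ((c1 * c1) ^ p * Bc) * (lam * (1/(p+1))) := by
                apply mul_le_mul_of_nonneg_right
                  (mul_le_mul_of_nonneg_right hc2c1p hBcpos.le)
                positivity
            _ = (c1 * c1) ^ p * (Bc * (lam * (1/(p+1)))) := by ring
        calc Real.exp (-(p+1)) * (c2 ^ p * (Real.sinh (lam * (r-1)) * Real.cosh lam
              + Real.cosh (lam * (r-1)) * Real.sinh lam))
            = Real.exp (-(p+1)) * (c2 ^ p * (Real.sinh (lam * (r-1)) * Real.cosh lam))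
              + Real.exp (-(p+1)) * (c2 ^ p * (Real.cosh (lam * (r-1)) * Real.sinh lam)) := by
              ring
          _ ≤ c2 ^ p * Real.sinh (lam * (r-1)) + (c1 * c1) ^ p * (Bc * (lam * (1/(p+1)))) :=
              add_le_add t1 t2
      rw [hSval, hIAval]
      have hdiv : Real.exp (-(p+1)) * (c2 ^ p * Real.sinh (lam * r)) / lam
          ≤ (c2 ^ p * Real.sinh (lam * (r-1))
            + (c1 * c1) ^ p * (Bc * (lam * (1/(p+1))))) / lam :=
        div_le_div_of_nonneg_right hmain hl0.le
      calc Real.exp (-(p+1)) * (c2 ^ p * (Real.sinh (lam * r) / lam))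
          = Real.exp (-(p+1)) * (c2 ^ p * Real.sinh (lam * r)) / lam := by ring
        _ ≤ (c2 ^ p * Real.sinh (lam * (r-1))
              + (c1 * c1) ^ p * (Bc * (lam * (1/(p+1))))) / lam := hdiv
        _ = c2 ^ p * (Real.sinh (lam * (r-1)) / lam)
              + (c1 * c1) ^ p * (Bc * (1/(p+1))) := by
            field_simp
  -- positivity of the constant
  have haconst : 0 < aconst n := by
    have g1 : 0 < Real.Gamma (((n:ℝ)-1)/2) := Real.Gamma_pos_of_pos (by linarith)
    have g2 : 0 < Real.Gamma ((1:ℝ)/2) := Real.Gamma_pos_of_pos (by norm_num)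
    have g3 : 0 < Real.Gamma (((n:ℝ)-1)/2 + 1/2) := Real.Gamma_pos_of_pos (by linarith)
    unfold aconst realBeta
    exact div_pos (Real.rpow_pos_of_pos two_pos _) (div_pos (mul_pos g1 g2) g3)
  -- final assembly
  have hrpnn : (0:ℝ) ≤ K ^ p := Real.rpow_nonneg hKpos.le p
  have step2 : K ^ p * (Real.exp (-(p+1)) * (c2 ^ p * S)) ≤ ∫ s in (0:ℝ)..r, g s :=
    le_trans (mul_le_mul_of_nonneg_left hstar hrpnn) hI
  have hKexp : (0:ℝ) ≤ K ^ ((2:ℝ) - (n:ℝ)) := Real.rpow_nonneg hKpos.le _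
  have step3 : K ^ ((2:ℝ) - (n:ℝ)) * (K ^ p * (Real.exp (-(p+1)) * (c2 ^ p * S)))
      ≤ K ^ ((2:ℝ) - (n:ℝ)) * ∫ s in (0:ℝ)..r, g s :=
    mul_le_mul_of_nonneg_left step2 hKexp
  have hpe1 : -((n:ℝ) - 1) / 2 = -(p+1) := by rw [hp_def]; ring
  have hpe2 : ((n:ℝ) - 1) / 2 = p + 1 := by rw [hp_def]; ring
  have hsph : sphFnI n lam r = aconst n * K ^ ((2:ℝ) - (n:ℝ)) * ∫ s in (0:ℝ)..r, g s := by
    simp only [sphFnI, hK_def, hp_def, hg_def]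
  have hexpo : K ^ ((2:ℝ) - (n:ℝ)) * K ^ p = (K ^ (p+1))⁻¹ := by
    rw [← Real.rpow_add hKpos, show (2:ℝ) - (n:ℝ) + p = -(p+1) by rw [hp_def]; ring,
      Real.rpow_neg hKpos.le]
  have lhs_eq : aconst n * Real.exp (-(p+1)) * c2 ^ p * (S / K ^ (p+1))
      = aconst n * (K ^ ((2:ℝ) - (n:ℝ)) * (K ^ p * (Real.exp (-(p+1)) * (c2 ^ p * S)))) := by
    rw [div_eq_mul_inv, show K ^ ((2:ℝ) - (n:ℝ)) * (K ^ p * (Real.exp (-(p+1)) * (c2 ^ p * S)))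
      = (K ^ ((2:ℝ) - (n:ℝ)) * K ^ p) * (Real.exp (-(p+1)) * (c2 ^ p * S)) from by ring, hexpo]
    ring
  rw [hpe1, hpe2, hsph, lhs_eq, mul_assoc (aconst n)]
  exact mul_le_mul_of_nonneg_left step3 haconst.le
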